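/- Let χ : ℤ² × ℤ² → ℤ be the bilinear form given with respect to the standard basis by the matrix [[-1,-1],[0,-1]]. Then a vector v ∈ ℤ² satisfies χ(v,v) = -1 if and only if v equals ±(1,0), ±(0,1), or ±(-1,1). -/
import Mathlib


/-- Euler form with matrix [[-1,-1],[0,-1]]. -/
def chi (v w : ℤ × ℤ) : ℤ := -v.1 * w.1 - v.1 * w.2 - v.2 * w.2

/-- Classification of vectors of square -1 for the Euler form. -/
theorem stmt_1 (v : ℤ × ℤ) :
    chi v v = -1 ↔
      v = (1, 0) ∨ v = (-1, 0) ∨ v = (0, 1) ∨ v = (0, -1) ∨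
      v = (-1, 1) ∨ v = (1, -1) := by
  obtain ⟨a, b⟩ := v
  simp only [chi, Prod.mk.injEq]
  constructor
  · intro h
    have ha1 : -1 ≤ a := by nlinarith [sq_nonneg (a+2*b)]
    have ha2 : a ≤ 1 := by nlinarith [sq_nonneg (a+2*b)]
    have hb1 : -1 ≤ b := by nlinarith [sq_nonneg (2*a+b)]
    have hb2 : b ≤ 1 := by nlinarith [sq_nonneg (2*a+b)]
    interval_cases a <;> interval_cases b <;> omega
  · rintro (⟨rfl, rfl⟩ | ⟨rfl, rfl⟩ | ⟨rfl, rfl⟩ | ⟨rfl, rfl⟩ | ⟨rfl, rfl⟩ | ⟨rfl, rfl⟩) <;> ring
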